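/- Let (W,S) be a Coxeter group, w ∈ W, (s,t) ∈ 𝔐, and suppose reduced expressions →a, →b for w satisfy: →b is obtained from →a by an (s,t)-braid move, with Invs →b obtained from Invs →a by replacing a factor q ρ_{s,t} q⁻¹ (for some q ∈ W) by its reversal. Set s'=qsq⁻¹, t'=qtq⁻¹. If (u,v) ∈ 𝔑 satisfies (u,v) ≠ (s',t') and (u,v) ≠ (t',s'), then has_{u,v} →b = has_{u,v} →a. -/

import Mathlib

open scoped Classical

/-- The word `(s, t, s, t, …)` with `m` letters. -/
def altList {α : Type*} (s t : α) (m : ℕ) : List α :=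
  (List.range m).map (fun k => if k % 2 = 0 then s else t)

/-- The word `ρ_{s,t} = ((st)^0 s, (st)^1 s, …, (st)^{m-1} s)`. -/
def rhoWord {W : Type*} [Group W] (s t : W) (m : ℕ) : List W :=
  (List.range m).map (fun k => (s * t) ^ k * s)

/-- `b` is obtained from `a` by an `(s_i, s_j)`-braid move. -/
def IsBraidMove {B W : Type*} [Group W] {M : CoxeterMatrix B}
    (cs : CoxeterSystem M W) (i j : B) (a b : List B) : Prop :=
  i ≠ j ∧ M.M i j ≠ 0 ∧
  ∃ p : ℕ, p + M.M i j ≤ a.length ∧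
    a = a.take p ++ altList i j (M.M i j) ++ a.drop (p + M.M i j) ∧
    b = a.take p ++ altList j i (M.M i j) ++ a.drop (p + M.M i j)

/-- The set `𝔑 = ⋃_{x ∈ W} x 𝔐 x⁻¹`. -/
def NSet {B W : Type*} [Group W] {M : CoxeterMatrix B}
    (cs : CoxeterSystem M W) : Set (W × W) :=
  {p | ∃ (x : W) (i j : B), i ≠ j ∧ M.M i j ≠ 0 ∧
    p.1 = x * cs.simple i * x⁻¹ ∧ p.2 = x * cs.simple j * x⁻¹}

/-- `has_{u,v} ω ∈ {0,1}` records whether `ρ_{u,v}` is a subword of `Invs ω`. -/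
noncomputable def HasFn {B W : Type*} [Group W] {M : CoxeterMatrix B}
    (cs : CoxeterSystem M W) (ω : List B) : W × W → ℤ :=
  fun p => if List.Sublist (rhoWord p.1 p.2 (orderOf (p.1 * p.2))) (cs.leftInvSeq ω)
    then 1 else 0

namespace BraidAux

open List

variable {B W : Type*} [Group W] {M : CoxeterMatrix B} (cs : CoxeterSystem M W)

/-- The basic involution `(t, ε) ↦ (s_c t s_c, ±ε)` used in Tits's sign trick. -/
noncomputable def flipFun (c : B) : W × ℤˣ → W × ℤˣ :=
  fun p => (cs.simple c * p.1 * cs.simple c, if p.1 = cs.simple c then -p.2 else p.2)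

lemma simple_conj_eq_simple_iff (c : B) (t : W) :
    (cs.simple c * t * cs.simple c = cs.simple c) ↔ t = cs.simple c := by
  have hss := cs.simple_mul_simple_self c
  have key : cs.simple c * cs.simple c * cs.simple c = cs.simple c := by
    rw [hss, one_mul]
  constructor
  · intro h
    have h2 := congrArg (fun x => cs.simple c * x * cs.simple c) h
    have h3 : cs.simple c * (cs.simple c * t * cs.simple c) * cs.simple c
        = (cs.simple c * cs.simple c) * t * (cs.simple c * cs.simple c) := by group
    rw [h3, hss, one_mul, mul_one] at h2
    rw [h2, one_mul]
  · rintro rfl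
    exact key

lemma flipFun_involutive (c : B) : Function.Involutive (flipFun cs c) := by
  rintro ⟨t, ε⟩
  have hss := cs.simple_mul_simple_self c
  have h1 : cs.simple c * (cs.simple c * t * cs.simple c) * cs.simple c = t := by
    have h3 : cs.simple c * (cs.simple c * t * cs.simple c) * cs.simple c
        = (cs.simple c * cs.simple c) * t * (cs.simple c * cs.simple c) := by group
    rw [h3, hss, one_mul, mul_one]
  simp only [flipFun, h1, simple_conj_eq_simple_iff]
  by_cases h : t = cs.simple c <;> simp [h]

/-- The involution as a permutation. -/
noncomputable def flipPerm (c : B) : Equiv.Perm (W × ℤˣ) :=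
  (flipFun_involutive cs c).toPerm

lemma flipPerm_apply (c : B) (t : W) (ε : ℤˣ) :
    flipPerm cs c (t, ε) = (cs.simple c * t * cs.simple c,
      if t = cs.simple c then -ε else ε) := rfl


section Lift

variable (i j : B)

/-- Sign change function for the composite `flipPerm i * flipPerm j`. -/
noncomputable def sgnFun (t : W) : ℤˣ :=
  (if t = cs.simple j then -1 else 1) *
    (if t = cs.simple j * cs.simple i * cs.simple j then -1 else 1)

lemma F_apply (t : W) (ε : ℤˣ) :
    (flipPerm cs i * flipPerm cs j) (t, ε) =
      ((cs.simple i * cs.simple j) * t * (cs.simple i * cs.simple j)⁻¹,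
        ε * sgnFun cs i j t) := by
  have hinv : (cs.simple i * cs.simple j)⁻¹ = cs.simple j * cs.simple i := by
    rw [mul_inv_rev, cs.inv_simple, cs.inv_simple]
  have hcond : (cs.simple j * t * cs.simple j = cs.simple i) ↔
      (t = cs.simple j * cs.simple i * cs.simple j) := by
    constructor
    · intro h
      have := congrArg (fun x => cs.simple j * x * cs.simple j) h
      have h3 : cs.simple j * (cs.simple j * t * cs.simple j) * cs.simple j
          = (cs.simple j * cs.simple j) * t * (cs.simple j * cs.simple j) := by group
      rw [h3, cs.simple_mul_simple_self, one_mul, mul_one] at this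
      exact this
    · rintro rfl
      have h3 : cs.simple j * (cs.simple j * cs.simple i * cs.simple j) * cs.simple j
          = (cs.simple j * cs.simple j) * cs.simple i * (cs.simple j * cs.simple j) := by
        group
      rw [h3, cs.simple_mul_simple_self, one_mul, mul_one]
  have happ : (flipPerm cs i * flipPerm cs j) (t, ε)
      = flipPerm cs i (flipPerm cs j (t, ε)) := rfl
  rw [happ, flipPerm_apply, flipPerm_apply, hinv]
  simp only [hcond, sgnFun]
  rw [Prod.mk.injEq]
  constructor
  · group
  · by_cases h1 : t = cs.simple j <;>
      by_cases h2 : t = cs.simple j * cs.simple i * cs.simple j <;>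
      simp only [if_pos, if_neg, h1, h2, if_true, if_false] <;> simp

lemma F_pow (n : ℕ) (t : W) (ε : ℤˣ) :
    ((flipPerm cs i * flipPerm cs j) ^ n) (t, ε) =
      ((cs.simple i * cs.simple j) ^ n * t * ((cs.simple i * cs.simple j) ^ n)⁻¹,
        ε * ∏ k ∈ Finset.range n,
          sgnFun cs i j ((cs.simple i * cs.simple j) ^ k * t *
            ((cs.simple i * cs.simple j) ^ k)⁻¹)) := by
  induction n generalizing t ε with
  | zero => simp
  | succ n ih =>
    have hstep : ((flipPerm cs i * flipPerm cs j) ^ (n + 1)) (t, ε)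
        = ((flipPerm cs i * flipPerm cs j) ^ n) ((flipPerm cs i * flipPerm cs j) (t, ε)) := by
      rw [pow_succ]
      rfl
    rw [hstep, F_apply, ih]
    set p := cs.simple i * cs.simple j with hp
    rw [Prod.mk.injEq]
    constructor
    · show p ^ n * (p * t * p⁻¹) * (p ^ n)⁻¹ = p ^ (n + 1) * t * (p ^ (n + 1))⁻¹
      rw [pow_succ']
      group
    · show ε * sgnFun cs i j t * ∏ k ∈ Finset.range n,
          sgnFun cs i j (p ^ k * (p * t * p⁻¹) * (p ^ k)⁻¹)
        = ε * ∏ k ∈ Finset.range (n + 1), sgnFun cs i j (p ^ k * t * (p ^ k)⁻¹)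
      have hc : ∀ k, p ^ k * (p * t * p⁻¹) * (p ^ k)⁻¹
          = p ^ (k + 1) * t * (p ^ (k + 1))⁻¹ := by
        intro k
        rw [pow_succ']
        group
      rw [Finset.prod_congr rfl (fun k _ => congrArg (sgnFun cs i j) (hc k)),
        Finset.prod_range_succ']
      have h0 : p ^ (0:ℕ) * t * (p ^ (0:ℕ))⁻¹ = t := by simp
      rw [h0, mul_assoc, mul_comm (sgnFun cs i j t)]


private lemma prod_range_two_mul {N : Type*} [CommMonoid N] (h : ℕ → N) (m : ℕ) :
    ∏ e ∈ Finset.range (2 * m), h e = ∏ k ∈ Finset.range m, (h (2 * k) * h (2 * k + 1)) := by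
  induction m with
  | zero => simp
  | succ m ih =>
    have : 2 * (m + 1) = (2 * m) + 1 + 1 := by ring
    rw [this, Finset.prod_range_succ, Finset.prod_range_succ, ih, Finset.prod_range_succ,
      mul_assoc]

lemma flip_liftable : M.IsLiftable (fun c => flipPerm cs c) := by
  intro i j
  set p := cs.simple i * cs.simple j with hp
  set m := M.M i j with hm
  have hpm : p ^ m = 1 := cs.simple_mul_simple_pow i j
  have hjpj : ∀ n : ℕ, cs.simple j * p ^ n * cs.simple j = (p ^ n)⁻¹ := by
    intro n
    have h1 : cs.simple j * p * cs.simple j = p⁻¹ := by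
      rw [hp, mul_inv_rev, cs.inv_simple, cs.inv_simple]
      have : cs.simple j * (cs.simple i * cs.simple j) * cs.simple j
          = cs.simple j * cs.simple i * (cs.simple j * cs.simple j) := by group
      rw [this, cs.simple_mul_simple_self, mul_one]
    have h2 : cs.simple j * p ^ n * cs.simple j
        = (cs.simple j * p * (cs.simple j)⁻¹) ^ n := by
      rw [conj_pow, cs.inv_simple]
    rw [h2, cs.inv_simple, h1, inv_pow]
  have conj_eq_iff : ∀ a t x : W, (a * t * a⁻¹ = x ↔ t = a⁻¹ * x * a) := by
    intro a t x
    constructor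
    · intro h; rw [← h]; group
    · intro h; rw [h]; group
  have hcomm : ∀ n : ℕ, cs.simple j * p ^ n = (p ^ n)⁻¹ * cs.simple j := by
    intro n
    have h0 : cs.simple j * p ^ n * (cs.simple j * cs.simple j) = (p ^ n)⁻¹ * cs.simple j := by
      rw [← mul_assoc, hjpj n]
    rwa [cs.simple_mul_simple_self, mul_one] at h0
  have hmove : ∀ n : ℕ, (p ^ n)⁻¹ * cs.simple j * p ^ n = (p ^ (2 * n))⁻¹ * cs.simple j := by
    intro n
    calc (p ^ n)⁻¹ * cs.simple j * p ^ n = (p ^ n)⁻¹ * (cs.simple j * p ^ n) := by group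
      _ = (p ^ n)⁻¹ * ((p ^ n)⁻¹ * cs.simple j) := by rw [hcomm n]
      _ = (p ^ n * p ^ n)⁻¹ * cs.simple j := by group
      _ = (p ^ (2 * n))⁻¹ * cs.simple j := by rw [two_mul, pow_add]
  apply Equiv.ext
  rintro ⟨t, ε⟩
  show (((flipPerm cs i) * (flipPerm cs j)) ^ m) (t, ε) = (t, ε)
  rw [F_pow, Prod.mk.injEq]
  constructor
  · show p ^ m * t * (p ^ m)⁻¹ = t
    rw [hpm]; group
  · show ε * ∏ k ∈ Finset.range m, sgnFun cs i j (p ^ k * t * (p ^ k)⁻¹) = ε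
    set h : ℕ → ℤˣ := fun e => if t = (p ^ e)⁻¹ * cs.simple j then -1 else 1 with hh
    have hsgn : ∀ k : ℕ, sgnFun cs i j (p ^ k * t * (p ^ k)⁻¹) = h (2 * k) * h (2 * k + 1) := by
      intro k
      have c1 : (p ^ k * t * (p ^ k)⁻¹ = cs.simple j) ↔ (t = (p ^ (2 * k))⁻¹ * cs.simple j) := by
        rw [conj_eq_iff, hmove]
      have c2 : (p ^ k * t * (p ^ k)⁻¹ = cs.simple j * cs.simple i * cs.simple j)
          ↔ (t = (p ^ (2 * k + 1))⁻¹ * cs.simple j) := by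
        rw [conj_eq_iff]
        have e1 : cs.simple j * cs.simple i * cs.simple j = cs.simple j * p := by
          rw [hp]; group
        have e2 : (p ^ k)⁻¹ * (cs.simple j * p) * p ^ k
            = (p ^ (2 * k + 1))⁻¹ * cs.simple j := by
          calc (p ^ k)⁻¹ * (cs.simple j * p) * p ^ k
              = (p ^ k)⁻¹ * cs.simple j * p ^ (k + 1) := by rw [pow_succ']; group
            _ = (p ^ k)⁻¹ * ((p ^ (k + 1))⁻¹ * cs.simple j) := by
                have h1 : cs.simple j * p ^ (k + 1) = (p ^ (k + 1))⁻¹ * cs.simple j := by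
                  have h2 := hmove (k + 1)
                  calc cs.simple j * p ^ (k + 1)
                      = p ^ (k + 1) * ((p ^ (k + 1))⁻¹ * cs.simple j * p ^ (k + 1)) := by group
                    _ = p ^ (k + 1) * ((p ^ (2 * (k + 1)))⁻¹ * cs.simple j) := by rw [h2]
                    _ = (p ^ (k + 1))⁻¹ * cs.simple j := by
                        rw [show 2 * (k + 1) = (k + 1) + (k + 1) by ring, pow_add]
                        group
                rw [mul_assoc, h1]
            _ = (p ^ (2 * k + 1))⁻¹ * cs.simple j := by
                rw [show 2 * k + 1 = k + (k + 1) by ring, pow_add]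
                group
        rw [e1, e2]
      rw [sgnFun, hh]
      simp only [c1, c2]
    rw [Finset.prod_congr rfl (fun k _ => hsgn k), ← prod_range_two_mul h m,
      two_mul, Finset.prod_range_add]
    have hper : ∀ e, h (m + e) = h e := by
      intro e
      simp only [hh, pow_add, hpm, one_mul]
    rw [Finset.prod_congr rfl (fun e _ => hper e), Int.units_mul_self, mul_one]

end Lift

/-- Tits's sign representation `W →* Perm (W × ℤˣ)`. -/
noncomputable def signRep : W →* Equiv.Perm (W × ℤˣ) :=
  cs.lift ⟨fun c => flipPerm cs c, flip_liftable cs⟩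

lemma signRep_simple (c : B) : signRep cs (cs.simple c) = flipPerm cs c :=
  cs.lift_apply_simple (flip_liftable cs) c

lemma signRep_inv_apply (ω : List B) (t : W) (ε : ℤˣ) :
    signRep cs (cs.wordProd ω)⁻¹ (t, ε) =
      ((cs.wordProd ω)⁻¹ * t * cs.wordProd ω,
        ε * (-1) ^ (List.count t (cs.leftInvSeq ω))) := by
  induction ω generalizing t ε with
  | nil => simp
  | cons c ω' ih =>
    have hw : cs.wordProd (c :: ω') = cs.simple c * cs.wordProd ω' := cs.wordProd_cons c ω'
    have hinv : (cs.wordProd (c :: ω'))⁻¹ = (cs.wordProd ω')⁻¹ * cs.simple c := by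
      rw [hw, mul_inv_rev, cs.inv_simple]
    have happ : signRep cs (cs.wordProd (c :: ω'))⁻¹ (t, ε)
        = signRep cs (cs.wordProd ω')⁻¹ (signRep cs (cs.simple c) (t, ε)) := by
      rw [hinv, map_mul]
      rfl
    rw [happ, signRep_simple, flipPerm_apply, ih]
    have hlis : cs.leftInvSeq (c :: ω')
        = cs.simple c :: List.map (MulAut.conj (cs.simple c)) (cs.leftInvSeq ω') := rfl
    rw [hlis, Prod.mk.injEq]
    have hccount : List.count t (List.map (MulAut.conj (cs.simple c)) (cs.leftInvSeq ω'))
        = List.count (cs.simple c * t * cs.simple c) (cs.leftInvSeq ω') := by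
      have hinj : Function.Injective (MulAut.conj (cs.simple c) : W → W) :=
        (MulAut.conj (cs.simple c)).injective
      have := List.count_map_of_injective (cs.leftInvSeq ω')
        (MulAut.conj (cs.simple c) : W → W) hinj (cs.simple c * t * cs.simple c)
      have harg : (MulAut.conj (cs.simple c) : W → W) (cs.simple c * t * cs.simple c) = t := by
        simp only [MulAut.conj_apply, cs.inv_simple]
        have h3 : cs.simple c * (cs.simple c * t * cs.simple c) * cs.simple c
            = (cs.simple c * cs.simple c) * t * (cs.simple c * cs.simple c) := by group
        rw [h3, cs.simple_mul_simple_self, one_mul, mul_one]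
      rw [harg] at this
      exact this
    constructor
    · rw [hinv, hw]; group
    · rw [List.count_cons, hccount]
      by_cases hts : t = cs.simple c
      · subst hts
        have h5 : cs.simple c * cs.simple c * cs.simple c = cs.simple c := by
          rw [cs.simple_mul_simple_self, one_mul]
        rw [h5, if_pos rfl, if_pos (by simp), pow_succ, ← mul_assoc, mul_neg_one, neg_mul]
      · have hbeq : ¬ ((cs.simple c == t) = true) := by
          simp only [beq_iff_eq]
          exact fun h => hts h.symm
        rw [if_neg hts, if_neg hbeq, add_zero]



lemma count_parity (ω ω' : List B) (h : cs.wordProd ω = cs.wordProd ω') (t : W) :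
    ((-1 : ℤˣ)) ^ (List.count t (cs.leftInvSeq ω))
      = (-1) ^ (List.count t (cs.leftInvSeq ω')) := by
  have h1 := signRep_inv_apply cs ω t 1
  have h2 := signRep_inv_apply cs ω' t 1
  rw [h] at h1
  rw [h1] at h2
  have := congrArg Prod.snd h2
  simpa using this

/-- Strong exchange for simple reflections (left version). -/
lemma simple_mem_leftInvSeq (ω : List B) (c : B)
    (hlt : cs.length (cs.simple c * cs.wordProd ω) < cs.length (cs.wordProd ω)) :
    cs.simple c ∈ cs.leftInvSeq ω := by
  obtain ⟨ζ, hζred, hζ⟩ := cs.exists_reduced_word' (cs.simple c * cs.wordProd ω)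
  have hprod : cs.wordProd (c :: ζ) = cs.wordProd ω := by
    rw [cs.wordProd_cons, ← hζ, ← mul_assoc, cs.simple_mul_simple_self, one_mul]
  have hc0 : List.count (cs.simple c) (cs.leftInvSeq ζ) = 0 := by
    rw [List.count_eq_zero]
    intro hmem
    have hinv := cs.isLeftInversion_of_mem_leftInvSeq hζred hmem
    have hlt2 := hinv.2
    rw [← hζ, ← mul_assoc, cs.simple_mul_simple_self, one_mul] at hlt2
    omega
  have hccount : List.count (cs.simple c)
      (List.map (MulAut.conj (cs.simple c)) (cs.leftInvSeq ζ))
      = List.count (cs.simple c) (cs.leftInvSeq ζ) := by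
    have hinj : Function.Injective (MulAut.conj (cs.simple c) : W → W) :=
      (MulAut.conj (cs.simple c)).injective
    have := List.count_map_of_injective (cs.leftInvSeq ζ)
      (MulAut.conj (cs.simple c) : W → W) hinj (cs.simple c)
    have harg : (MulAut.conj (cs.simple c) : W → W) (cs.simple c) = cs.simple c := by
      simp [MulAut.conj_apply]
    rw [harg] at this
    exact this
  have hcnt : List.count (cs.simple c) (cs.leftInvSeq (c :: ζ)) = 1 := by
    have hlis : cs.leftInvSeq (c :: ζ)
        = cs.simple c :: List.map (MulAut.conj (cs.simple c)) (cs.leftInvSeq ζ) := rfl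
    rw [hlis, List.count_cons, hccount, hc0, if_pos (by simp)]
  have hpar := count_parity cs ω (c :: ζ) hprod.symm (cs.simple c)
  rw [hcnt, pow_one] at hpar
  have hodd : ¬ Even (List.count (cs.simple c) (cs.leftInvSeq ω)) := by
    intro heven
    rw [heven.neg_one_pow] at hpar
    exact (by decide : ((1:ℤˣ)) ≠ -1) hpar
  have hpos : 0 < List.count (cs.simple c) (cs.leftInvSeq ω) := by
    rcases Nat.eq_zero_or_pos (List.count (cs.simple c) (cs.leftInvSeq ω)) with h0 | h0
    · exact absurd (h0 ▸ Even.zero) hodd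
    · exact h0
  exact List.count_pos_iff.mp hpos

/-- Strong exchange for simple reflections (right version). -/
lemma simple_mem_rightInvSeq (ω : List B) (c : B)
    (hlt : cs.length (cs.wordProd ω * cs.simple c) < cs.length (cs.wordProd ω)) :
    cs.simple c ∈ cs.rightInvSeq ω := by
  have h1 : cs.length (cs.simple c * cs.wordProd ω.reverse) < cs.length (cs.wordProd ω.reverse) := by
    rw [cs.wordProd_reverse]
    have e1 : cs.simple c * (cs.wordProd ω)⁻¹ = (cs.wordProd ω * cs.simple c)⁻¹ := by
      rw [mul_inv_rev, cs.inv_simple]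
    rw [e1, cs.length_inv, cs.length_inv]
    exact hlt
  have := simple_mem_leftInvSeq cs ω.reverse c h1
  rw [cs.leftInvSeq_reverse] at this
  exact List.mem_reverse.mp this

/-- Every word contains a reduced sublist with the same product. -/
lemma exists_reduced_sublist (ω : List B) :
    ∃ τ : List B, τ.Sublist ω ∧ cs.IsReduced τ ∧ cs.wordProd τ = cs.wordProd ω := by
  generalize hn : ω.length = n
  induction n using Nat.strong_induction_on generalizing ω with
  | _ n ih =>
  by_cases hred : cs.IsReduced ω
  · exact ⟨ω, List.Sublist.refl ω, hred, rfl⟩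
  · rcases List.eq_nil_or_concat ω with rfl | ⟨ω₁, c, rfl⟩
    · exact absurd (by simp [CoxeterSystem.IsReduced]) hred
    · simp only [List.concat_eq_append] at hn hred ⊢
      by_cases hred1 : cs.IsReduced ω₁
      · -- descent at the end
        have hω : cs.wordProd (ω₁ ++ [c]) = cs.wordProd ω₁ * cs.simple c := by
          rw [cs.wordProd_append, cs.wordProd_singleton]
        have hlt : cs.length (cs.wordProd ω₁ * cs.simple c) < cs.length (cs.wordProd ω₁) := by
          rcases cs.length_mul_simple (cs.wordProd ω₁) c with hup | hdn
          · exfalso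
            apply hred
            have hred1' : cs.length (cs.wordProd ω₁) = ω₁.length := hred1
            show cs.length (cs.wordProd (ω₁ ++ [c])) = (ω₁ ++ [c]).length
            rw [hω, hup, hred1']
            simp
          · omega
        have hmem := simple_mem_rightInvSeq cs ω₁ c hlt
        obtain ⟨k, hk, hget⟩ := List.mem_iff_getElem.mp hmem
        have hklt : k < ω₁.length := by
          have := cs.length_rightInvSeq ω₁
          omega
        have herase : cs.wordProd ω₁ * cs.simple c = cs.wordProd (ω₁.eraseIdx k) := by
          have := cs.wordProd_mul_getD_rightInvSeq ω₁ k
          rwa [List.getD_eq_getElem _ _ hk, hget] at this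
        have hlen : (ω₁.eraseIdx k).length < n := by
          rw [List.length_eraseIdx]
          simp only [hklt, if_true]
          have : ω₁.length ≤ n := by
            rw [← hn]
            simp
          omega
        obtain ⟨τ, hsub, hτred, hτprod⟩ := ih _ hlen (ω₁.eraseIdx k) rfl
        refine ⟨τ, ?_, hτred, ?_⟩
        · exact hsub.trans ((ω₁.eraseIdx_sublist k).trans (List.sublist_append_left ω₁ [c]))
        · rw [hτprod, ← herase, hω]
      · -- reduce ω₁ first
        obtain ⟨τ₁, hsub1, hτ1red, hτ1prod⟩ := ih ω₁.length
          (by rw [← hn]; simp) ω₁ rfl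
        have hτ1len : τ₁.length < ω₁.length := by
          have h1 : cs.length (cs.wordProd ω₁) < ω₁.length :=
            lt_of_le_of_ne (cs.length_wordProd_le ω₁) hred1
          have h2 : cs.length (cs.wordProd τ₁) = τ₁.length := hτ1red
          rw [hτ1prod] at h2
          omega
        obtain ⟨τ, hsub, hτred, hτprod⟩ := ih (τ₁ ++ [c]).length
          (by rw [← hn]; simp; omega) (τ₁ ++ [c]) rfl
        refine ⟨τ, hsub.trans (hsub1.append (List.Sublist.refl [c])), hτred, ?_⟩
        rw [hτprod, cs.wordProd_append, cs.wordProd_append, hτ1prod]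


/-- Words in the letters `i, j` have products in the subgroup generated by `s i, s j`. -/
lemma wordProd_mem_closure (i j : B) (ω : List B) (h : ∀ c ∈ ω, c = i ∨ c = j) :
    cs.wordProd ω ∈ Subgroup.closure {cs.simple i, cs.simple j} := by
  induction ω with
  | nil =>
    rw [cs.wordProd_nil]
    exact one_mem _
  | cons c ω' ih =>
    rw [cs.wordProd_cons]
    refine mul_mem ?_ (ih (fun d hd => h d (List.mem_cons_of_mem c hd)))
    rcases h c (List.mem_cons_self) with rfl | rfl
    · exact Subgroup.subset_closure (Set.mem_insert _ _)
    · exact Subgroup.subset_closure (Set.mem_insert_of_mem _ rfl)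

/-- Every element of the dihedral subgroup has a reduced word in the letters `i, j`. -/
lemma exists_reduced_dihedral_word (i j : B) (u : W)
    (hu : u ∈ Subgroup.closure {cs.simple i, cs.simple j}) :
    ∃ ω : List B, (∀ c ∈ ω, c = i ∨ c = j) ∧ cs.IsReduced ω ∧ cs.wordProd ω = u := by
  have main : ∃ ω : List B, (∀ c ∈ ω, c = i ∨ c = j) ∧ cs.wordProd ω = u := by
    induction hu using Subgroup.closure_induction with
    | mem x hx =>
      rcases hx with rfl | rfl
      · exact ⟨[i], by simp, by simp⟩
      · exact ⟨[j], by simp, by simp⟩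
    | one => exact ⟨[], by simp, by simp⟩
    | mul x y hx hy ihx ihy =>
      obtain ⟨ω₁, h1, hp1⟩ := ihx
      obtain ⟨ω₂, h2, hp2⟩ := ihy
      refine ⟨ω₁ ++ ω₂, ?_, by rw [cs.wordProd_append, hp1, hp2]⟩
      intro c hc
      rcases List.mem_append.mp hc with h | h
      · exact h1 c h
      · exact h2 c h
    | inv x hx ihx =>
      obtain ⟨ω₁, h1, hp1⟩ := ihx
      refine ⟨ω₁.reverse, ?_, by rw [cs.wordProd_reverse, hp1]⟩
      intro c hc
      exact h1 c (List.mem_reverse.mp hc)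
  obtain ⟨ω, hletters, hprod⟩ := main
  obtain ⟨τ, hsub, hred, hτprod⟩ := exists_reduced_sublist cs ω
  exact ⟨τ, fun c hc => hletters c (hsub.mem hc), hred, by rw [hτprod, hprod]⟩

/-- Length additivity over a minimal coset representative. -/
lemma length_wordProd_mul_of_min (i j : B) (z : W)
    (hz : ∀ h ∈ Subgroup.closure {cs.simple i, cs.simple j},
      cs.length z ≤ cs.length (h * z)) :
    ∀ ω : List B, cs.IsReduced ω → (∀ c ∈ ω, c = i ∨ c = j) →
      cs.length (cs.wordProd ω * z) = ω.length + cs.length z := by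
  intro ω
  induction ω with
  | nil => intro _ _; simp
  | cons c ω₁ ih =>
    intro hred hletters
    have hred1 : cs.IsReduced ω₁ := by
      have h1 : cs.length (cs.wordProd (c :: ω₁)) = ω₁.length + 1 := by
        rw [hred]; simp
      have h2 : cs.length (cs.wordProd ω₁) ≤ ω₁.length := cs.length_wordProd_le ω₁
      have h3 : cs.length (cs.wordProd (c :: ω₁)) ≤ cs.length (cs.wordProd ω₁) + 1 := by
        rw [cs.wordProd_cons]
        rcases cs.length_simple_mul (cs.wordProd ω₁) c with h | h <;> omega
      show cs.length (cs.wordProd ω₁) = ω₁.length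
      omega
    have hletters1 : ∀ c' ∈ ω₁, c' = i ∨ c' = j :=
      fun d hd => hletters d (List.mem_cons_of_mem c hd)
    have ihval := ih hred1 hletters1
    have hassoc : cs.wordProd (c :: ω₁) * z = cs.simple c * (cs.wordProd ω₁ * z) := by
      rw [cs.wordProd_cons]; group
    rcases cs.length_simple_mul (cs.wordProd ω₁ * z) c with hup | hdn
    · rw [hassoc, hup, ihval]
      simp
      omega
    · -- descent: contradiction
      exfalso
      have hlt : cs.length (cs.simple c * (cs.wordProd ω₁ * z)) < cs.length (cs.wordProd ω₁ * z) := by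
        omega
      obtain ⟨ζ, hζred, hζ⟩ := cs.exists_reduced_word' z
      have hζlen : ζ.length = cs.length z := by
        have : cs.length (cs.wordProd ζ) = ζ.length := hζred
        rw [← hζ] at this
        omega
      have hword : cs.wordProd (ω₁ ++ ζ) = cs.wordProd ω₁ * z := by
        rw [cs.wordProd_append, ← hζ]
      have hlt2 : cs.length (cs.simple c * cs.wordProd (ω₁ ++ ζ))
          < cs.length (cs.wordProd (ω₁ ++ ζ)) := by
        rw [hword]; exact hlt
      have hmem := simple_mem_leftInvSeq cs (ω₁ ++ ζ) c hlt2
      obtain ⟨k, hk, hget⟩ := List.mem_iff_getElem.mp hmem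
      have hklt : k < ω₁.length + ζ.length := by
        have hlen5 : (cs.leftInvSeq (ω₁ ++ ζ)).length = ω₁.length + ζ.length := by
          rw [cs.length_leftInvSeq, List.length_append]
        omega
      have herase : cs.simple c * (cs.wordProd ω₁ * z) = cs.wordProd ((ω₁ ++ ζ).eraseIdx k) := by
        have h6 := cs.getD_leftInvSeq_mul_wordProd (ω₁ ++ ζ) k
        rw [List.getD_eq_getElem _ _ hk, hget, hword] at h6
        exact h6
      by_cases hkl : k < ω₁.length
      · rw [List.eraseIdx_append_of_lt_length hkl, cs.wordProd_append, ← hζ,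
          ← mul_assoc] at herase
        have hcancel : cs.simple c * cs.wordProd ω₁ = cs.wordProd (ω₁.eraseIdx k) :=
          mul_right_cancel herase
        have hlen1 : cs.length (cs.simple c * cs.wordProd ω₁) ≤ ω₁.length - 1 := by
          rw [hcancel]
          have h4 := cs.length_wordProd_le (ω₁.eraseIdx k)
          rw [List.length_eraseIdx] at h4
          simpa [hkl] using h4
        have hlen2 : cs.length (cs.simple c * cs.wordProd ω₁) = ω₁.length + 1 := by
          rw [← cs.wordProd_cons]
          rw [hred]
          simp
        omega
      · push_neg at hkl
        rw [List.eraseIdx_append_of_length_le hkl, cs.wordProd_append] at herase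
        set k' := k - ω₁.length with hk'
        have hk'lt : k' < ζ.length := by omega
        have hform : cs.wordProd (ζ.eraseIdx k')
            = ((cs.wordProd ω₁)⁻¹ * cs.simple c * cs.wordProd ω₁) * z := by
          calc cs.wordProd (ζ.eraseIdx k')
              = (cs.wordProd ω₁)⁻¹ * (cs.wordProd ω₁ * cs.wordProd (ζ.eraseIdx k')) := by group
            _ = (cs.wordProd ω₁)⁻¹ * (cs.simple c * (cs.wordProd ω₁ * z)) := by
                rw [← herase]
            _ = ((cs.wordProd ω₁)⁻¹ * cs.simple c * cs.wordProd ω₁) * z := by group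
        have hmemK : (cs.wordProd ω₁)⁻¹ * cs.simple c * cs.wordProd ω₁
            ∈ Subgroup.closure {cs.simple i, cs.simple j} := by
          have hω₁K := wordProd_mem_closure cs i j ω₁ hletters1
          have hcK : cs.simple c ∈ Subgroup.closure {cs.simple i, cs.simple j} := by
            rcases hletters c (List.mem_cons_self) with rfl | rfl
            · exact Subgroup.subset_closure (Set.mem_insert _ _)
            · exact Subgroup.subset_closure (Set.mem_insert_of_mem _ rfl)
          exact mul_mem (mul_mem (inv_mem hω₁K) hcK) hω₁K
        have hge := hz _ hmemK
        rw [← hform] at hge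
        have hle : cs.length (cs.wordProd (ζ.eraseIdx k')) ≤ ζ.length - 1 := by
          have h4 := cs.length_wordProd_le (ζ.eraseIdx k')
          rw [List.length_eraseIdx] at h4
          simpa [hk'lt] using h4
        omega


lemma orderOf_conj_eq (w x : W) : orderOf (w * x * w⁻¹) = orderOf x := by
  have h := orderOf_injective (MulAut.conj w).toMonoidHom
    (MulAut.conj w).injective x
  simpa [MulAut.conj_apply] using h

/-- Kilmoyer-style rigidity: if a conjugate of a pair of simple reflections lands inside
the standard dihedral subgroup generated by `s i, s j`, then the order of the product is
either 1 or equal to that of `s i * s j`. -/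
lemma kilmoyer (i j a b : B) (x : W)
    (hxa : x * cs.simple a * x⁻¹ ∈ Subgroup.closure {cs.simple i, cs.simple j})
    (hxb : x * cs.simple b * x⁻¹ ∈ Subgroup.closure {cs.simple i, cs.simple j}) :
    cs.simple a * cs.simple b = 1 ∨
      orderOf (cs.simple a * cs.simple b) = orderOf (cs.simple i * cs.simple j) := by
  set K := Subgroup.closure {cs.simple i, cs.simple j} with hK
  set K' := Subgroup.closure {cs.simple a, cs.simple b} with hK'
  have hsaK' : cs.simple a ∈ K' := Subgroup.subset_closure (Set.mem_insert _ _)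
  have hsbK' : cs.simple b ∈ K' := Subgroup.subset_closure (Set.mem_insert_of_mem _ rfl)
  -- x K' x⁻¹ ⊆ K
  have hconjK : ∀ g ∈ K', x * g * x⁻¹ ∈ K := by
    intro g hg
    induction hg using Subgroup.closure_induction with
    | mem y hy =>
      rcases hy with rfl | rfl
      · exact hxa
      · exact hxb
    | one => simpa using one_mem K
    | mul y y' hy hy' ihy ihy' =>
      have : x * (y * y') * x⁻¹ = (x * y * x⁻¹) * (x * y' * x⁻¹) := by group
      rw [this]
      exact mul_mem ihy ihy'
    | inv y hy ihy =>
      have : x * y⁻¹ * x⁻¹ = (x * y * x⁻¹)⁻¹ := by group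
      rw [this]
      exact inv_mem ihy
  -- minimal element of the double coset
  have hex : ∃ n : ℕ, ∃ w : W, (∃ y ∈ K, ∃ p ∈ K', x = y * w * p) ∧ cs.length w = n :=
    ⟨cs.length x, x, ⟨1, one_mem K, 1, one_mem K', by group⟩, rfl⟩
  classical
  set n₀ := Nat.find hex with hn₀
  obtain ⟨z, ⟨y, hy, p, hp, hxyzp⟩, hzlen⟩ := Nat.find_spec hex
  have hmin : ∀ w : W, (∃ y ∈ K, ∃ p ∈ K', x = y * w * p) → cs.length z ≤ cs.length w := by
    intro w hw
    rw [hzlen]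
    exact Nat.find_le ⟨w, hw, rfl⟩
  have hzmin : ∀ h ∈ K, cs.length z ≤ cs.length (h * z) := by
    intro h hh
    apply hmin
    exact ⟨y * h⁻¹, mul_mem hy (inv_mem hh), p, hp, by rw [hxyzp]; group⟩
  -- z conjugates s a, s b into K
  have hzconj : ∀ c : B, (c = a ∨ c = b) → z * cs.simple c * z⁻¹ ∈ K := by
    intro c hc
    have hcK' : cs.simple c ∈ K' := by
      rcases hc with rfl | rfl
      · exact hsaK'
      · exact hsbK'
    have hg : p⁻¹ * cs.simple c * p ∈ K' := mul_mem (mul_mem (inv_mem hp) hcK') hp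
    have h1 := hconjK _ hg
    have h2 : x * (p⁻¹ * cs.simple c * p) * x⁻¹ = y * (z * cs.simple c * z⁻¹) * y⁻¹ := by
      rw [hxyzp]; group
    rw [h2] at h1
    have h3 : z * cs.simple c * z⁻¹ = y⁻¹ * (y * (z * cs.simple c * z⁻¹) * y⁻¹) * y := by
      group
    rw [h3]
    exact mul_mem (mul_mem (inv_mem hy) h1) hy
  -- z * s c has length ℓ z + 1 for c ∈ {a, b}
  have hzc : ∀ c : B, (c = a ∨ c = b) → cs.length (z * cs.simple c) = cs.length z + 1 := by
    intro c hc
    have hcK' : cs.simple c ∈ K' := by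
      rcases hc with rfl | rfl
      · exact hsaK'
      · exact hsbK'
    have hTz : ∃ y' ∈ K, ∃ p' ∈ K', x = y' * (z * cs.simple c) * p' := by
      refine ⟨y, hy, (cs.simple c)⁻¹ * p, mul_mem (inv_mem hcK') hp, ?_⟩
      rw [hxyzp]; group
    have hge := hmin _ hTz
    rcases cs.length_mul_simple z c with h | h
    · omega
    · omega
  -- each z s_c z⁻¹ is a simple reflection among s i, s j
  have hsimple : ∀ c : B, (c = a ∨ c = b) →
      ∃ d : B, (d = i ∨ d = j) ∧ z * cs.simple c * z⁻¹ = cs.simple d := by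
    intro c hc
    obtain ⟨ω, hletters, hred, hprod⟩ :=
      exists_reduced_dihedral_word cs i j _ (hzconj c hc)
    have hlen : cs.length (cs.wordProd ω * z) = ω.length + cs.length z :=
      length_wordProd_mul_of_min cs i j z hzmin ω hred hletters
    have heq : cs.wordProd ω * z = z * cs.simple c := by
      rw [hprod]; group
    rw [heq, hzc c hc] at hlen
    have hω1 : ω.length = 1 := by omega
    match ω, hω1 with
    | [d], _ =>
      refine ⟨d, hletters d (by simp), ?_⟩
      rw [← hprod, cs.wordProd_singleton]
  obtain ⟨da, hda, hzada⟩ := hsimple a (Or.inl rfl)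
  obtain ⟨db, hdb, hzbdb⟩ := hsimple b (Or.inr rfl)
  have hprodconj : z * (cs.simple a * cs.simple b) * z⁻¹ = cs.simple da * cs.simple db := by
    calc z * (cs.simple a * cs.simple b) * z⁻¹
        = (z * cs.simple a * z⁻¹) * (z * cs.simple b * z⁻¹) := by group
      _ = cs.simple da * cs.simple db := by rw [hzada, hzbdb]
  by_cases hdd : da = db
  · left
    have : z * (cs.simple a * cs.simple b) * z⁻¹ = 1 := by
      rw [hprodconj, hdd, cs.simple_mul_simple_self]
    have h7 := congrArg (fun g => z⁻¹ * g * z) this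
    calc cs.simple a * cs.simple b
        = z⁻¹ * (z * (cs.simple a * cs.simple b) * z⁻¹) * z := by group
      _ = z⁻¹ * 1 * z := by rw [this]
      _ = 1 := by group
  · right
    have horder : orderOf (cs.simple a * cs.simple b)
        = orderOf (cs.simple da * cs.simple db) := by
      rw [← hprodconj, orderOf_conj_eq]
    rw [horder]
    rcases hda with h5 | h5 <;> rcases hdb with h6 | h6
    · exact absurd (h5.trans h6.symm) hdd
    · rw [h5, h6]
    · rw [h5, h6]
      have : cs.simple j * cs.simple i = (cs.simple i * cs.simple j)⁻¹ := by
        rw [mul_inv_rev, cs.inv_simple, cs.inv_simple]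
      rw [this, orderOf_inv]
    · exact absurd (h5.trans h6.symm) hdd


section Main

lemma rho_aux {s t : W} (hss : s * s = 1) (htt : t * t = 1) :
    ∀ k : ℕ, (s * t) ^ (k + 1) * ((t * s) ^ k * t) = s := by
  intro k
  induction k with
  | zero =>
    show (s * t) ^ 1 * ((t * s) ^ 0 * t) = s
    rw [pow_one, pow_zero, one_mul, mul_assoc, htt, mul_one]
  | succ k ih =>
    have hcanc : (s * t) * (t * s) = 1 := by
      calc (s * t) * (t * s) = s * (t * t) * s := by group
        _ = s * s := by rw [htt, mul_one]
        _ = 1 := hss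
    have hZ : ∀ Z : W, (s * t) * ((t * s) * Z) = Z := by
      intro Z
      rw [← mul_assoc, hcanc, one_mul]
    calc (s * t) ^ (k + 1 + 1) * ((t * s) ^ (k + 1) * t)
        = (s * t) ^ (k + 1) * ((s * t) * ((t * s) * ((t * s) ^ k * t))) := by
          rw [pow_succ (s*t) (k+1), pow_succ' (t*s) k]
          simp only [mul_assoc]
      _ = (s * t) ^ (k + 1) * ((t * s) ^ k * t) := by rw [hZ]
      _ = s := ih

lemma rhoWord_length (s t : W) (m : ℕ) : (rhoWord s t m).length = m := by
  simp [rhoWord]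

lemma rhoWord_getElem (s t : W) (m : ℕ) (l : ℕ) (hl : l < m) :
    (rhoWord s t m)[l]'(by rw [rhoWord_length]; exact hl) = (s * t) ^ l * s := by
  simp [rhoWord]

lemma rhoWord_reverse {s t : W} (m : ℕ) (hss : s * s = 1) (htt : t * t = 1)
    (hm : (s * t) ^ m = 1) :
    (rhoWord s t m).reverse = rhoWord t s m := by
  apply List.ext_getElem
  · simp [rhoWord]
  · intro k h1 h2
    have hk : k < m := by
      rw [List.length_reverse, rhoWord_length] at h1
      exact h1
    rw [List.getElem_reverse]
    simp only [rhoWord, List.getElem_map, List.getElem_range, List.length_map,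
      List.length_range]
    calc (s*t)^(m-1-k) * s
        = (s*t)^(m-1-k) * ((s*t)^(k+1) * ((t*s)^k * t)) := by rw [rho_aux hss htt k]
      _ = ((s*t)^(m-1-k) * (s*t)^(k+1)) * ((t*s)^k * t) := by group
      _ = (s*t)^m * ((t*s)^k * t) := by
          rw [← pow_add]
          congr 2
          omega
      _ = (t*s)^k * t := by rw [hm, one_mul]

/-- The key combinatorial lemma: if `ρ_{u,v}` is a subword of `X ++ B ++ Y`,
it is also a subword of `X ++ B.reverse ++ Y`. -/
lemma main_move (i j : B) (hij : i ≠ j) (hfin : M.M i j ≠ 0) (q u v : W) (X Y : List W)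
    (hnd : (X ++ (rhoWord (cs.simple i) (cs.simple j) (M.M i j)).map
        (fun t => q * t * q⁻¹) ++ Y).Nodup)
    (huv : (u, v) ∈ NSet cs)
    (h1 : (u, v) ≠ (q * cs.simple i * q⁻¹, q * cs.simple j * q⁻¹))
    (hsub : (rhoWord u v (orderOf (u * v))).Sublist
      (X ++ (rhoWord (cs.simple i) (cs.simple j) (M.M i j)).map (fun t => q * t * q⁻¹) ++ Y)) :
    (rhoWord u v (orderOf (u * v))).Sublist
      (X ++ ((rhoWord (cs.simple i) (cs.simple j) (M.M i j)).map
        (fun t => q * t * q⁻¹)).reverse ++ Y) := by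
  classical
  set m' := M.M i j with hm'
  set Bl := (rhoWord (cs.simple i) (cs.simple j) m').map (fun t => q * t * q⁻¹) with hBl
  set ρ := rhoWord u v (orderOf (u * v)) with hρ
  set m := orderOf (u * v) with hm
  set st := cs.simple i * cs.simple j with hst
  set g := q * st * q⁻¹ with hg
  set r := q * cs.simple i * q⁻¹ with hr
  have hBllen : Bl.length = m' := by
    rw [hBl, List.length_map, rhoWord_length]
  have hρlen : ρ.length = m := by rw [hρ, rhoWord_length]
  have hndassoc : (X ++ (Bl ++ Y)).Nodup := by
    rw [← List.append_assoc]; exact hnd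
  have hdisjX : X.Disjoint (Bl ++ Y) := (List.nodup_append'.mp hndassoc).2.2
  have hndBY : (Bl ++ Y).Nodup := (List.nodup_append.mp hndassoc).2.1
  have hBnodup : Bl.Nodup := (List.nodup_append.mp hndBY).1
  have hdisjBY : Bl.Disjoint Y := (List.nodup_append'.mp hndBY).2.2
  have hm'pos : 0 < m' := Nat.pos_of_ne_zero hfin
  have hm'2 : 2 ≤ m' := by
    have := M.off_diagonal i j hij
    omega
  have hBg : ∀ l : ℕ, ∀ hl : l < m', Bl[l]'(by rw [hBllen]; exact hl)
      = q * (st ^ l * cs.simple i) * q⁻¹ := by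
    intro l hl
    simp [hBl, rhoWord, hst]
  have hpowm' : st ^ m' = 1 := cs.simple_mul_simple_pow i j
  have horder : orderOf st = m' := by
    by_contra hne
    have hdvd : orderOf st ∣ m' := orderOf_dvd_of_pow_eq_one hpowm'
    have hopos : 0 < orderOf st :=
      orderOf_pos_iff.mpr (isOfFinOrder_iff_pow_eq_one.mpr ⟨m', hm'pos, hpowm'⟩)
    have holt : orderOf st < m' := lt_of_le_of_ne (Nat.le_of_dvd hm'pos hdvd) hne
    have hBo := hBg (orderOf st) holt
    have hB0 := hBg 0 (by omega)
    rw [pow_orderOf_eq_one st] at hBo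
    rw [pow_zero] at hB0
    rw [← hB0] at hBo
    have := (hBnodup.getElem_inj_iff).mp hBo.symm
    omega
  have hgord : orderOf g = m' := by
    rw [hg, orderOf_conj_eq, horder]
  have hgn : ∀ n : ℕ, q * st ^ n * q⁻¹ = g ^ n := fun n => (conj_pow).symm
  have hgz : ∀ n : ℤ, q * st ^ n * q⁻¹ = g ^ n := fun n => (conj_zpow).symm
  -- decompose the sublist
  rw [List.append_assoc] at hsub
  obtain ⟨ρ1, ρ23, hsplit1, hρ1X, hρ23⟩ := List.sublist_append_iff.mp hsub
  obtain ⟨ρ2, ρ3, hsplit2, hρ2B, hρ3Y⟩ := List.sublist_append_iff.mp hρ23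
  rw [List.append_assoc]
  match ρ2, hρ2B, hsplit2 with
  | [], hρ2B, hsplit2 =>
    rw [hsplit1, hsplit2, List.nil_append]
    exact hρ1X.append (hρ3Y.trans (List.sublist_append_right Bl.reverse Y))
  | [e], hρ2B, hsplit2 =>
    rw [hsplit1, hsplit2]
    refine hρ1X.append (List.Sublist.append ?_ hρ3Y)
    rw [List.singleton_sublist, List.mem_reverse]
    exact hρ2B.subset (List.mem_singleton_self e)
  | e1 :: e2 :: l2, hρ2B, hsplit2 =>
    exfalso
    set k₀ := ρ1.length with hk₀
    have hcat : ρ = ρ1 ++ (e1 :: e2 :: (l2 ++ ρ3)) := by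
      rw [hsplit1, hsplit2]
      simp
    have hk1 : k₀ + 1 < ρ.length := by
      rw [hcat, List.length_append]
      simp only [List.length_cons]
      omega
    have hk1m : k₀ + 1 < m := by rw [← hρlen]; exact hk1
    have hm2 : 2 ≤ m := by omega
    have huv1 : u * v ≠ 1 := by
      intro h
      have : m = 1 := by rw [hm, h, orderOf_one]
      omega
    have hρget : ∀ l : ℕ, ∀ hl : l < m, ρ[l]'(by rw [hρlen]; exact hl) = (u * v) ^ l * u := by
      intro l hl
      simp [hρ, rhoWord]
    have he1 : e1 = (u * v) ^ k₀ * u := by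
      have hb : k₀ < ρ.length := by omega
      have h3 : ρ[k₀]'hb = e1 := by
        rw [List.getElem_of_eq hcat hb, List.getElem_append_right (le_refl k₀)]
        simp [hk₀]
      rw [← h3, hρget k₀ (by rw [← hρlen]; exact hb)]
    have he2 : e2 = (u * v) ^ (k₀ + 1) * u := by
      have h3 : ρ[k₀ + 1]'hk1 = e2 := by
        rw [List.getElem_of_eq hcat hk1,
          List.getElem_append_right (by omega : ρ1.length ≤ k₀ + 1)]
        simp [hk₀]
      rw [← h3, hρget (k₀ + 1) hk1m]
    -- membership of e1, e2 in the block
    have he1B : e1 ∈ Bl := hρ2B.subset (by simp)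
    have he2B : e2 ∈ Bl := hρ2B.subset (by simp)
    obtain ⟨t1, ht1, he1eq⟩ := List.mem_map.mp he1B
    obtain ⟨a1, ha1, ht1eq⟩ := List.mem_map.mp ht1
    obtain ⟨t2, ht2, he2eq⟩ := List.mem_map.mp he2B
    obtain ⟨a2, ha2, ht2eq⟩ := List.mem_map.mp ht2
    rw [List.mem_range] at ha1 ha2
    have he1g : e1 = g ^ (a1 : ℤ) * r := by
      rw [← he1eq, ← ht1eq]
      calc q * ((cs.simple i * cs.simple j) ^ a1 * cs.simple i) * q⁻¹
          = (q * st ^ a1 * q⁻¹) * (q * cs.simple i * q⁻¹) := by rw [hst]; group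
        _ = g ^ a1 * r := by rw [hgn a1, hr]
        _ = g ^ (a1 : ℤ) * r := by rw [zpow_natCast]
    have he2g : e2 = g ^ (a2 : ℤ) * r := by
      rw [← he2eq, ← ht2eq]
      calc q * ((cs.simple i * cs.simple j) ^ a2 * cs.simple i) * q⁻¹
          = (q * st ^ a2 * q⁻¹) * (q * cs.simple i * q⁻¹) := by rw [hst]; group
        _ = g ^ a2 * r := by rw [hgn a2, hr]
        _ = g ^ (a2 : ℤ) * r := by rw [zpow_natCast]
    set D : ℤ := (a2 : ℤ) - (a1 : ℤ) with hD
    have huvD : u * v = g ^ D := by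
      have h7 : e2 * e1⁻¹ = u * v := by
        rw [he1, he2, pow_succ']
        group
      have h8 : e2 * e1⁻¹ = g ^ D := by
        rw [he1g, he2g, hD]
        group
      rw [← h7, h8]
    have hEz : u = g ^ ((a1 : ℤ) - D * (k₀ : ℤ)) * r := by
      have h9 : u = ((u * v) ^ k₀)⁻¹ * e1 := by
        rw [he1]; group
      rw [h9, he1g, huvD, ← zpow_natCast (g ^ D) k₀, ← zpow_mul]
      group
    set Ez : ℤ := (a1 : ℤ) - D * (k₀ : ℤ) with hEzdef
    -- membership of conjugates in the dihedral subgroup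
    set K := Subgroup.closure {cs.simple i, cs.simple j} with hK
    have hstK : st ∈ K := mul_mem
      (Subgroup.subset_closure (Set.mem_insert _ _))
      (Subgroup.subset_closure (Set.mem_insert_of_mem _ rfl))
    have hsiK : cs.simple i ∈ K := Subgroup.subset_closure (Set.mem_insert _ _)
    have hqu : q⁻¹ * u * q = st ^ Ez * cs.simple i := by
      rw [hEz, ← hgz Ez, hr]
      group
    have hquK : q⁻¹ * u * q ∈ K := by
      rw [hqu]
      exact mul_mem (K.zpow_mem hstK Ez) hsiK
    have hqv : q⁻¹ * v * q = (q⁻¹ * u * q)⁻¹ * st ^ D := by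
      have h10 : q⁻¹ * (u * v) * q = st ^ D := by
        rw [huvD, ← hgz D]
        group
      calc q⁻¹ * v * q = (q⁻¹ * u * q)⁻¹ * (q⁻¹ * (u * v) * q) := by group
        _ = (q⁻¹ * u * q)⁻¹ * st ^ D := by rw [h10]
    have hqvK : q⁻¹ * v * q ∈ K := by
      rw [hqv]
      exact mul_mem (inv_mem hquK) (K.zpow_mem hstK D)
    -- use the NSet structure
    obtain ⟨x, a, b, hab, hMab, hufrm, hvfrm⟩ := huv
    simp only at hufrm hvfrm
    have hxa : (q⁻¹ * x) * cs.simple a * (q⁻¹ * x)⁻¹ ∈ K := by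
      have h11 : (q⁻¹ * x) * cs.simple a * (q⁻¹ * x)⁻¹ = q⁻¹ * u * q := by
        rw [hufrm]; group
      rw [h11]; exact hquK
    have hxb : (q⁻¹ * x) * cs.simple b * (q⁻¹ * x)⁻¹ ∈ K := by
      have h11 : (q⁻¹ * x) * cs.simple b * (q⁻¹ * x)⁻¹ = q⁻¹ * v * q := by
        rw [hvfrm]; group
      rw [h11]; exact hqvK
    have huvx : u * v = x * (cs.simple a * cs.simple b) * x⁻¹ := by
      rw [hufrm, hvfrm]; group
    rcases kilmoyer cs i j a b (q⁻¹ * x) hxa hxb with hone | hord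
    · exact huv1 (by rw [huvx, hone, mul_one, mul_inv_cancel])
    · have hmm' : m = m' := by
        rw [hm, huvx, orderOf_conj_eq, hord, horder]
      -- every entry of ρ lies in the block
      have hall : ∀ w ∈ ρ, w ∈ Bl := by
        intro w hw
        rw [hρ] at hw
        obtain ⟨k, hk, hweq⟩ := List.mem_map.mp hw
        rw [List.mem_range] at hk
        have hwg : w = g ^ (D * (k : ℤ) + Ez) * r := by
          rw [← hweq, huvD, hEz, ← zpow_natCast (g ^ D) k, ← zpow_mul]
          group
        set zz := (D * (k : ℤ) + Ez) % (m' : ℤ) with hzz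
        have hm'z : ((m' : ℤ)) ≠ 0 := by exact_mod_cast hm'pos.ne'
        have hzz0 : 0 ≤ zz := Int.emod_nonneg _ hm'z
        have hzzlt : zz < (m' : ℤ) := Int.emod_lt_of_pos _ (by exact_mod_cast hm'pos)
        have hgzz : g ^ zz = g ^ (D * (k : ℤ) + Ez) := by
          rw [hzz, ← hgord]
          exact zpow_mod_orderOf g _
        set aa := zz.toNat with haa
        have haaz : (aa : ℤ) = zz := Int.toNat_of_nonneg hzz0
        have haalt : aa < m' := by omega
        refine List.mem_map.mpr ⟨st ^ aa * cs.simple i, ?_, ?_⟩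
        · exact List.mem_map.mpr ⟨aa, List.mem_range.mpr haalt, rfl⟩
        · calc q * (st ^ aa * cs.simple i) * q⁻¹
              = (q * st ^ aa * q⁻¹) * (q * cs.simple i * q⁻¹) := by group
            _ = g ^ aa * r := by rw [hgn aa, hr]
            _ = g ^ (aa : ℤ) * r := by rw [zpow_natCast]
            _ = g ^ zz * r := by rw [haaz]
            _ = g ^ (D * (k : ℤ) + Ez) * r := by rw [hgzz]
            _ = w := hwg.symm
      -- the flanks are empty
      have hρ1nil : ρ1 = [] := by
        cases hρ1Xcase : ρ1 with
        | nil => rfl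
        | cons w0 t0 =>
          exfalso
          have hw0X : w0 ∈ X := hρ1X.subset (by rw [hρ1Xcase]; simp)
          have hw0ρ : w0 ∈ ρ := by
            rw [hcat, hρ1Xcase]
            simp
          exact hdisjX hw0X (List.mem_append_left Y (hall w0 hw0ρ))
      have hρ3nil : ρ3 = [] := by
        cases hρ3case : ρ3 with
        | nil => rfl
        | cons w0 t0 =>
          exfalso
          have hw0Y : w0 ∈ Y := hρ3Y.subset (by rw [hρ3case]; simp)
          have hw0ρ : w0 ∈ ρ := by
            rw [hcat, hρ3case]
            simp
          exact hdisjBY (hall w0 hw0ρ) hw0Y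
      have hρeq : ρ = e1 :: e2 :: l2 := by
        rw [hcat, hρ1nil, hρ3nil]
        simp
      have hρBl : ρ = Bl := by
        refine List.Sublist.eq_of_length (hρeq ▸ hρ2B) ?_
        rw [hρlen, hBllen, hmm']
      have hb0ρ : (0 : ℕ) < ρ.length := by rw [hρlen]; omega
      have hb1ρ : (1 : ℕ) < ρ.length := by rw [hρlen]; omega
      have hb0B : (0 : ℕ) < Bl.length := by rw [hBllen]; omega
      have hb1B : (1 : ℕ) < Bl.length := by rw [hBllen]; omega
      have hu0 : u = q * cs.simple i * q⁻¹ := by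
        have h12 : ρ[0]'hb0ρ = Bl[0]'hb0B := List.getElem_of_eq hρBl hb0ρ
        rw [hρget 0 (by rw [← hρlen]; exact hb0ρ), hBg 0 (by rw [← hBllen]; exact hb0B)] at h12
        rw [pow_zero, one_mul, pow_zero, one_mul] at h12
        exact h12
      have hv1 : u * v * u = q * (st * cs.simple i) * q⁻¹ := by
        have h12 : ρ[1]'hb1ρ = Bl[1]'hb1B := List.getElem_of_eq hρBl hb1ρ
        rw [hρget 1 (by rw [← hρlen]; exact hb1ρ), hBg 1 (by rw [← hBllen]; exact hb1B)] at h12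
        rw [pow_one, pow_one] at h12
        rw [← h12]
      have hv : v = q * cs.simple j * q⁻¹ := by
        have e : v = u⁻¹ * (u * v * u) * u⁻¹ := by group
        rw [e, hv1, hu0, hst]
        group
      exact h1 (by rw [Prod.mk.injEq]; exact ⟨hu0, hv⟩)

end Main

end BraidAux

/-- In the situation of a braid move `→a → →b` with conjugator `q`,
setting `s' = qsq⁻¹`, `t' = qtq⁻¹`: for any `(u,v) ∈ 𝔑` with `(u,v) ≠ (s',t')` and
`(u,v) ≠ (t',s')`, one has `has_{u,v} →b = has_{u,v} →a`. -/
theorem has_unchanged_of_braid_move {B W : Type*} [Group W] {M : CoxeterMatrix B}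
    (cs : CoxeterSystem M W) (w : W) (i j : B) (hij : i ≠ j) (hfin : M.M i j ≠ 0)
    (a b : List B)
    (ha : cs.IsReduced a) (haw : cs.wordProd a = w)
    (hb : cs.IsReduced b) (hbw : cs.wordProd b = w)
    (hmove : IsBraidMove cs i j a b)
    (q : W)
    (hrepl : ∃ X Y : List W,
      cs.leftInvSeq a = X ++ (rhoWord (cs.simple i) (cs.simple j) (M.M i j)).map
        (fun x => q * x * q⁻¹) ++ Y ∧
      cs.leftInvSeq b = X ++ ((rhoWord (cs.simple i) (cs.simple j) (M.M i j)).map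
        (fun x => q * x * q⁻¹)).reverse ++ Y)
    (u v : W) (huv : (u, v) ∈ NSet cs)
    (h1 : (u, v) ≠ (q * cs.simple i * q⁻¹, q * cs.simple j * q⁻¹))
    (h2 : (u, v) ≠ (q * cs.simple j * q⁻¹, q * cs.simple i * q⁻¹)) :
    HasFn cs b (u, v) = HasFn cs a (u, v) := by
  classical
  obtain ⟨X, Y, hA, hB⟩ := hrepl
  have hndA := ha.nodup_leftInvSeq
  have hndB := hb.nodup_leftInvSeq
  rw [hA] at hndA
  rw [hB] at hndB
  have hrev : ((rhoWord (cs.simple i) (cs.simple j) (M.M i j)).map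
        (fun x => q * x * q⁻¹)).reverse
      = (rhoWord (cs.simple j) (cs.simple i) (M.M j i)).map (fun x => q * x * q⁻¹) := by
    rw [← List.map_reverse,
      BraidAux.rhoWord_reverse (M.M i j) (cs.simple_mul_simple_self i)
        (cs.simple_mul_simple_self j) (cs.simple_mul_simple_pow i j),
      M.symmetric j i]
  have hfin' : M.M j i ≠ 0 := by
    rw [M.symmetric j i]
    exact hfin
  simp only [HasFn]
  rw [hA, hB]
  refine if_congr ⟨?_, ?_⟩ rfl rfl
  · intro hs
    have hndB' : (X ++ (rhoWord (cs.simple j) (cs.simple i) (M.M j i)).map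
        (fun x => q * x * q⁻¹) ++ Y).Nodup := by
      rw [← hrev]; exact hndB
    have hs' : (rhoWord u v (orderOf (u * v))).Sublist
        (X ++ (rhoWord (cs.simple j) (cs.simple i) (M.M j i)).map
          (fun x => q * x * q⁻¹) ++ Y) := by
      rw [← hrev]; exact hs
    have hout := BraidAux.main_move cs j i hij.symm hfin' q u v X Y hndB' huv h2 hs'
    rw [← hrev, List.reverse_reverse] at hout
    exact hout
  · intro hs
    exact BraidAux.main_move cs i j hij hfin q u v X Y hndA huv h1 hs
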